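/- Let n ≥ 2 be an integer, D an open subset of ℝⁿ, and f : ℝ → ℝ continuously differentiable. Let u : ℝⁿ → ℝ be three times continuously differentiable and satisfy Δu(x) + f(u(x)) = 0 for all x ∈ D. Then the function z(x) = x · ∇u(x) (the inner product of x with the gradient of u) satisfies Δz(x) + f'(u(x)) z(x) = −2 f(u(x)) for all x ∈ D. -/

import Mathlib

open Set

/-- The Laplacian `Δg(x) = Σᵢ ∂²g/∂xᵢ²(x)` on Euclidean space. -/
noncomputable def lapl {n : ℕ} (g : EuclideanSpace ℝ (Fin n) → ℝ)
    (x : EuclideanSpace ℝ (Fin n)) : ℝ :=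
  ∑ i : Fin n,
    fderiv ℝ (fun y => fderiv ℝ g y (EuclideanSpace.single i 1)) x
      (EuclideanSpace.single i 1)

/-- `z(x) = x · ∇u(x) = Σᵢ xᵢ ∂u/∂xᵢ(x)`. -/
noncomputable def xDotGrad {n : ℕ} (u : EuclideanSpace ℝ (Fin n) → ℝ)
    (x : EuclideanSpace ℝ (Fin n)) : ℝ :=
  ∑ i : Fin n, x i * fderiv ℝ u x (EuclideanSpace.single i 1)

private lemma hasFDerivAt_apply_const {E F G : Type*} [NormedAddCommGroup E] [NormedSpace ℝ E]
    [NormedAddCommGroup F] [NormedSpace ℝ F] [NormedAddCommGroup G] [NormedSpace ℝ G]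
    {c : E → (F →L[ℝ] G)} {c' : E →L[ℝ] (F →L[ℝ] G)} {x : E}
    (hc : HasFDerivAt c c' x) (v : F) :
    HasFDerivAt (fun y => c y v) (c'.flip v) x := by
  simpa using hc.clm_apply (hasFDerivAt_const v x)

set_option maxHeartbeats 2000000 in
/-- If `Δu + f(u) = 0` on an open set `D ⊆ ℝⁿ`, then `z = x · ∇u` satisfies
`Δz + f'(u) z = -2 f(u)` on `D` (equation (1.3)). -/
theorem xDotGrad_equation
    (n : ℕ) (hn : 2 ≤ n) (D : Set (EuclideanSpace ℝ (Fin n))) (hD : IsOpen D)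
    (f : ℝ → ℝ) (hf : ContDiff ℝ 1 f)
    (u : EuclideanSpace ℝ (Fin n) → ℝ) (hu : ContDiff ℝ 3 u)
    (hode : ∀ x ∈ D, lapl u x + f (u x) = 0) :
    ∀ x ∈ D,
      lapl (xDotGrad u) x + deriv f (u x) * xDotGrad u x = -2 * f (u x) := by
  intro x hx
  set e : Fin n → EuclideanSpace ℝ (Fin n) := fun i => EuclideanSpace.single i 1 with he
  set F1 := fderiv ℝ u with hF1
  set F2 := fderiv ℝ F1 with hF2
  set F3 := fderiv ℝ F2 with hF3
  have hu1 : Differentiable ℝ u := hu.differentiable (by norm_num)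
  have hcF1 : ContDiff ℝ 2 F1 := hu.fderiv_right (by norm_num)
  have hcF2 : ContDiff ℝ 1 F2 := hcF1.fderiv_right (by norm_num)
  have h1 : ∀ y, HasFDerivAt u (F1 y) y := fun y => (hu1 y).hasFDerivAt
  have h2 : ∀ y, HasFDerivAt F1 (F2 y) y :=
    fun y => ((hcF1.differentiable (by norm_num)) y).hasFDerivAt
  have h3 : ∀ y, HasFDerivAt F2 (F3 y) y :=
    fun y => ((hcF2.differentiable (by norm_num)) y).hasFDerivAt
  have sym2 : ∀ y v w, F2 y v w = F2 y w v := fun y => second_derivative_symmetric h1 (h2 y)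
  have sym3 : ∀ v w, F3 x v w = F3 x w v := second_derivative_symmetric h2 (h3 x)
  have hD1 : ∀ (a : EuclideanSpace ℝ (Fin n)) (y), HasFDerivAt (fun z => F1 z a) ((F2 y).flip a) y :=
    fun a y => hasFDerivAt_apply_const (h2 y) a
  have hD2 : ∀ (a b : EuclideanSpace ℝ (Fin n)) (y),
      HasFDerivAt (fun z => F2 z a b) (((F3 y).flip a).flip b) y :=
    fun a b y => hasFDerivAt_apply_const (hasFDerivAt_apply_const (h3 y) a) b
  have symin : ∀ a b w, F3 x w a b = F3 x w b a := by
    intro a b w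
    have h := hD2 a b x
    have h' := hD2 b a x
    have hfun : (fun z => F2 z a b) = (fun z => F2 z b a) := funext fun z => sym2 z a b
    rw [hfun] at h
    have h2u := h.unique h'
    have := congrArg (fun L => L w) h2u
    simpa using this
  -- derivative of z = xDotGrad u
  have hz : ∀ y, HasFDerivAt (xDotGrad u)
      (∑ i, ((y i) • ((F2 y).flip (e i)) + (F1 y (e i)) • (EuclideanSpace.proj i))) y := by
    intro y
    have hrw : xDotGrad u = fun z => ∑ i, (EuclideanSpace.proj i) z * F1 z (e i) := by
      funext z
      simp [xDotGrad, ← hF1, he]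
    rw [hrw]
    refine HasFDerivAt.fun_sum fun i _ => ?_
    have := ((EuclideanSpace.proj (𝕜 := ℝ) i).hasFDerivAt (x := y)).fun_mul (hD1 (e i) y)
    simpa using this
  -- second derivative of z in coordinate direction j
  have hW : ∀ j : Fin n, HasFDerivAt (fun y => fderiv ℝ (xDotGrad u) y (e j))
      (∑ i, (((x i) • (((F3 x).flip (e j)).flip (e i)) + (F2 x (e j) (e i)) • (EuclideanSpace.proj i))
          + (e j i) • ((F2 x).flip (e i)))) x := by
    intro j
    have hrw : (fun y => fderiv ℝ (xDotGrad u) y (e j))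
        = fun y => ∑ i, ((EuclideanSpace.proj i) y * F2 y (e j) (e i) + F1 y (e i) * (e j i)) := by
      funext y
      rw [(hz y).fderiv]
      simp [ContinuousLinearMap.sum_apply]
    rw [hrw]
    refine HasFDerivAt.fun_sum fun i _ => HasFDerivAt.add ?_ ?_
    · have := ((EuclideanSpace.proj (𝕜 := ℝ) i).hasFDerivAt (x := x)).fun_mul (hD2 (e j) (e i) x)
      simpa using this
    · exact (hD1 (e i) x).mul_const (e j i)
  have hlapz : lapl (xDotGrad u) x
      = ∑ j, ∑ i, (x i * F3 x (e j) (e j) (e i) + F2 x (e j) (e i) * (e j i)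
          + (e j i) * F2 x (e j) (e i)) := by
    rw [lapl]
    refine Finset.sum_congr rfl fun j _ => ?_
    have hej : EuclideanSpace.single j (1:ℝ) = e j := rfl
    rw [hej, (hW j).fderiv]
    simp [ContinuousLinearMap.sum_apply, add_assoc]
  -- lapl u as a sum of second derivatives
  have hlapu : ∀ y, lapl u y = ∑ j, F2 y (e j) (e j) := by
    intro y
    rw [lapl]
    refine Finset.sum_congr rfl fun j _ => ?_
    have hej : EuclideanSpace.single j (1:ℝ) = e j := rfl
    rw [hej]
    have : (fun z => fderiv ℝ u z (e j)) = fun z => F1 z (e j) := rfl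
    rw [this, (hD1 (e j) y).fderiv]
    simp
  have hLa : HasFDerivAt (fun y => lapl u y) (∑ j, ((F3 x).flip (e j)).flip (e j)) x := by
    have hrw : (fun y => lapl u y) = fun y => ∑ j, F2 y (e j) (e j) := funext hlapu
    rw [hrw]
    exact HasFDerivAt.fun_sum fun j _ => hD2 (e j) (e j) x
  have hLb : HasFDerivAt (fun y => -(f (u y))) (-((deriv f (u x)) • (F1 x))) x := by
    have hfd : HasDerivAt f (deriv f (u x)) (u x) := (hf.differentiable (by norm_num) (u x)).hasDerivAt
    exact (hfd.comp_hasFDerivAt x (h1 x)).neg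
  have heq : (fun y => lapl u y) =ᶠ[nhds x] (fun y => -(f (u y))) := by
    filter_upwards [hD.mem_nhds hx] with y hy
    have := hode y hy
    linarith
  have hLc : HasFDerivAt (fun y => lapl u y) (-((deriv f (u x)) • (F1 x))) x :=
    hLb.congr_of_eventuallyEq heq
  have huniq := hLa.unique hLc
  have hsum3 : ∀ i, (∑ j, F3 x (e j) (e j) (e i)) = -(deriv f (u x) * F1 x (e i)) := by
    intro i
    have h0 := congrArg (fun L => L (e i)) huniq
    simp only [ContinuousLinearMap.sum_apply, ContinuousLinearMap.flip_apply,
      ContinuousLinearMap.neg_apply, ContinuousLinearMap.smul_apply, smul_eq_mul] at h0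
    rw [← h0]
    refine Finset.sum_congr rfl fun j _ => ?_
    exact (symin (e j) (e i) (e j)).trans (DFunLike.congr_fun (sym3 (e j) (e i)) (e j))
  have hzx : xDotGrad u x = ∑ i, x i * F1 x (e i) := by
    simp [xDotGrad, ← hF1, he]
  have hlapux : (∑ j, F2 x (e j) (e j)) = -(f (u x)) := by
    have h0 := hode x hx
    rw [hlapu x] at h0
    linarith
  -- assemble
  have hdelta : ∀ j : Fin n, ∑ i, (x i * F3 x (e j) (e j) (e i) + F2 x (e j) (e i) * (e j i)
      + (e j i) * F2 x (e j) (e i))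
      = (∑ i, x i * F3 x (e j) (e j) (e i)) + 2 * F2 x (e j) (e j) := by
    intro j
    rw [Finset.sum_add_distrib, Finset.sum_add_distrib]
    have hA : ∑ i, F2 x (e j) (e i) * (e j i) = F2 x (e j) (e j) := by
      simp [he, EuclideanSpace.single_apply]
    have hB : ∑ i, (e j i) * F2 x (e j) (e i) = F2 x (e j) (e j) := by
      simp [he, EuclideanSpace.single_apply]
    rw [hA, hB]
    ring
  have hswap : ∑ j, ∑ i, x i * F3 x (e j) (e j) (e i)
      = ∑ i, x i * (∑ j, F3 x (e j) (e j) (e i)) := by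
    rw [Finset.sum_comm]
    exact Finset.sum_congr rfl fun i _ => by rw [Finset.mul_sum]
  rw [hlapz, hzx]
  calc (∑ j, ∑ i, (x i * F3 x (e j) (e j) (e i) + F2 x (e j) (e i) * (e j i)
          + (e j i) * F2 x (e j) (e i))) + deriv f (u x) * ∑ i, x i * F1 x (e i)
      = (∑ j, ((∑ i, x i * F3 x (e j) (e j) (e i)) + 2 * F2 x (e j) (e j)))
          + deriv f (u x) * ∑ i, x i * F1 x (e i) := by
        rw [Finset.sum_congr rfl fun j _ => hdelta j]
    _ = (∑ i, x i * (∑ j, F3 x (e j) (e j) (e i))) + 2 * (∑ j, F2 x (e j) (e j))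
          + deriv f (u x) * ∑ i, x i * F1 x (e i) := by
        rw [Finset.sum_add_distrib, ← Finset.mul_sum, hswap]
    _ = (∑ i, x i * (-(deriv f (u x) * F1 x (e i)))) + 2 * (-(f (u x)))
          + deriv f (u x) * ∑ i, x i * F1 x (e i) := by
        rw [hlapux, Finset.sum_congr rfl fun i _ => by rw [hsum3 i]]
    _ = -2 * f (u x) := by
        have h0 : (∑ i, x i * (-(deriv f (u x) * F1 x (e i))))
            + ∑ i, deriv f (u x) * (x i * F1 x (e i)) = 0 := by
          rw [← Finset.sum_add_distrib]
          exact Finset.sum_eq_zero fun i _ => by ring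
        rw [Finset.mul_sum]
        linarith
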